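/- Let Q be a finite quiver without oriented cycles, β a dimension vector, σ ∈ C(Q,β), and let W ∈ Rep(Q,β)^{ss}_σ be σ-polystable. Then σ lies in the relative interior of the orbit cone Ω(W). -/

import Mathlib

open scoped BigOperators

namespace QuiverGIT

noncomputable section

variable {Q0 Q1 : Type} [Fintype Q0] [Fintype Q1]

/-- The representation space `Rep(Q,β)` of a quiver with vertex set `Q0`, arrow set `Q1`,
tail map `tl` and head map `hd`, for the dimension vector `β`. -/
abbrev RepSpace (tl hd : Q1 → Q0) (β : Q0 → ℕ) : Type :=
  ∀ a : Q1, Matrix (Fin (β (hd a))) (Fin (β (tl a))) ℂ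

/-- The quiver has no oriented cycles. -/
def NoOrientedCycles (tl hd : Q1 → Q0) : Prop :=
  ∀ (n : ℕ) (c : Fin (n + 1) → Q1),
    (∀ i : Fin n, hd (c i.castSucc) = tl (c i.succ)) → hd (c (Fin.last n)) ≠ tl (c 0)

/-- Pairing `σ(γ) = ∑ σ(x) γ(x)` of a real weight with a dimension vector. -/
def wt (σ : Q0 → ℝ) (γ : Q0 → ℕ) : ℝ := ∑ x, σ x * γ x

/-- The weight has integer coordinates. -/
def IsIntegralWt (σ : Q0 → ℝ) : Prop := ∀ x, ∃ n : ℤ, σ x = n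

variable {tl hd : Q1 → Q0} {β : Q0 → ℕ}

/-- A family of subspaces `S x ≤ ℂ^{β(x)}` is a subrepresentation of `W`. -/
def IsSubrep (W : RepSpace tl hd β) (S : ∀ x, Submodule ℂ (Fin (β x) → ℂ)) : Prop :=
  ∀ a : Q1, ∀ v ∈ S (tl a), (W a).mulVec v ∈ S (hd a)

/-- The dimension vector of a family of subspaces. -/
def dimVec (S : ∀ x : Q0, Submodule ℂ (Fin (β x) → ℂ)) : Q0 → ℕ :=
  fun x => Module.finrank ℂ (S x)

/-- `W` is `σ`-semi-stable. -/
def Semistable (σ : Q0 → ℝ) (W : RepSpace tl hd β) : Prop :=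
  wt σ β = 0 ∧
    ∀ S : ∀ x, Submodule ℂ (Fin (β x) → ℂ), IsSubrep W S → wt σ (dimVec S) ≤ 0

/-- `W` is `σ`-stable. -/
def Stable (σ : Q0 → ℝ) (W : RepSpace tl hd β) : Prop :=
  wt σ β = 0 ∧
    ∀ S : ∀ x, Submodule ℂ (Fin (β x) → ℂ), IsSubrep W S →
      S ≠ (fun _ => ⊥) → S ≠ (fun _ => ⊤) → wt σ (dimVec S) < 0

/-- The set `Rep(Q,β)^{ss}_σ` of `σ`-semi-stable representations. -/
def ssSet (tl hd : Q1 → Q0) (β : Q0 → ℕ) (σ : Q0 → ℝ) : Set (RepSpace tl hd β) :=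
  {W | Semistable σ W}

/-- `β₁ ↪ β` : every `β`-dimensional representation has a subrepresentation of
dimension vector `β₁`. -/
def Embeds (tl hd : Q1 → Q0) (β β₁ : Q0 → ℕ) : Prop :=
  ∀ W : RepSpace tl hd β, ∃ S : ∀ x, Submodule ℂ (Fin (β x) → ℂ),
    IsSubrep W S ∧ ∀ x, Module.finrank ℂ (S x) = β₁ x

/-- The cone `C(Q,β)` of effective weights. -/
def EffCone (tl hd : Q1 → Q0) (β : Q0 → ℕ) : Set (Q0 → ℝ) :=
  {σ | wt σ β = 0 ∧ ∀ β₁ : Q0 → ℕ, Embeds tl hd β β₁ → wt σ β₁ ≤ 0}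

/-- The action of `GL(β) = ∏ GL(β(x))` on `Rep(Q,β)` by simultaneous conjugation. -/
def glAct (g : ∀ x, GL (Fin (β x)) ℂ) (W : RepSpace tl hd β) : RepSpace tl hd β :=
  fun a => (g (hd a)).val * W a * ((g (tl a))⁻¹).val

/-- The `GL(β)`-orbit of `W`. -/
def glOrbit (W : RepSpace tl hd β) : Set (RepSpace tl hd β) :=
  {V | ∃ g, V = glAct g W}

/-- The coordinates of a point of `Rep(Q,β)`. -/
def coordFn (W : RepSpace tl hd β) : (Σ a : Q1, Fin (β (hd a)) × Fin (β (tl a))) → ℂ :=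
  fun p => W p.1 p.2.1 p.2.2

/-- The Zariski closure of a subset of `Rep(Q,β)`: the set of points where every
polynomial vanishing on the subset vanishes. -/
def zClosure (Z : Set (RepSpace tl hd β)) : Set (RepSpace tl hd β) :=
  {V | ∀ p : MvPolynomial ((a : Q1) × (Fin (β (hd a)) × Fin (β (tl a)))) ℂ,
      (∀ U ∈ Z, MvPolynomial.eval (coordFn U) p = 0) →
        MvPolynomial.eval (coordFn V) p = 0}

/-- `W` is `σ`-polystable : it is `σ`-semi-stable and its `GL(β)`-orbit is
(Zariski) closed in `Rep(Q,β)^{ss}_σ`. -/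
def Polystable (σ : Q0 → ℝ) (W : RepSpace tl hd β) : Prop :=
  Semistable σ W ∧ zClosure (glOrbit W) ∩ ssSet tl hd β σ = glOrbit W

/-- The orbit cone `Ω(W)` of a representation `W`. -/
def OmegaCone (W : RepSpace tl hd β) : Set (Q0 → ℝ) :=
  {σ | Semistable σ W}

/-- The GIT-cone `C(σ) = {σ' ∈ ℝ^{Q_0} : Rep(Q,β)^{ss}_σ ⊆ Rep(Q,β)^{ss}_{σ'}}`. -/
def gitCone (tl hd : Q1 → Q0) (β : Q0 → ℕ) (σ : Q0 → ℝ) : Set (Q0 → ℝ) :=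
  {σ' | ssSet tl hd β σ ⊆ ssSet tl hd β σ'}

/-- The GIT-cone `C(σ) = {σ' ∈ C(Q,β) : Rep(Q,β)^{ss}_σ ⊆ Rep(Q,β)^{ss}_{σ'}}`. -/
def gitConeE (tl hd : Q1 → Q0) (β : Q0 → ℕ) (σ : Q0 → ℝ) : Set (Q0 → ℝ) :=
  {σ' | σ' ∈ EffCone tl hd β ∧ ssSet tl hd β σ ⊆ ssSet tl hd β σ'}

/-- A rational convex polyhedral cone in `ℝ^{Q_0}` : a set cut out by finitely many
homogeneous linear inequalities with rational coefficients. -/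
def IsRatPolyCone (C : Set (Q0 → ℝ)) : Prop :=
  ∃ s : Finset (Q0 → ℚ), C = {σ | ∀ v ∈ s, (∑ x, σ x * (v x : ℝ)) ≤ 0}

/-- `F` is a face of the cone `C`, cut out by a supporting linear functional. -/
def IsFaceOf (F C : Set (Q0 → ℝ)) : Prop :=
  ∃ ℓ : (Q0 → ℝ) →ₗ[ℝ] ℝ, (∀ σ ∈ C, ℓ σ ≤ 0) ∧ F = {σ ∈ C | ℓ σ = 0}

/-- The restriction of `W` to the subrepresentation `T` is a `σ`-stable representation
(subrepresentations of `W|_T` are exactly the subrepresentations of `W` contained in `T`). -/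
def IsStableOn (σ : Q0 → ℝ) (W : RepSpace tl hd β)
    (T : ∀ x, Submodule ℂ (Fin (β x) → ℂ)) : Prop :=
  wt σ (dimVec T) = 0 ∧
    ∀ U : ∀ x, Submodule ℂ (Fin (β x) → ℂ), IsSubrep W U → (∀ x, U x ≤ T x) →
      U ≠ (fun _ => ⊥) → U ≠ T → wt σ (dimVec U) < 0

/-- `W` is a direct sum of `σ`-stable representations : `ℂ^β` decomposes as an internal
direct sum of subrepresentations on each of which `W` restricts to a `σ`-stable
representation. -/
def IsDirectSumOfStables (σ : Q0 → ℝ) (W : RepSpace tl hd β) : Prop :=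
  ∃ (n : ℕ) (T : Fin n → ∀ x, Submodule ℂ (Fin (β x) → ℂ)),
    (∀ i, IsSubrep W (T i)) ∧
    (∀ x, iSupIndep fun i => T i x) ∧
    (∀ x, (⨆ i, T i x) = ⊤) ∧
    ∀ i, IsStableOn σ W (T i)

/-- The factor `T/S` of two nested subrepresentations `S ≤ T` of `W` is a `σ`-stable
representation (subrepresentations of `T/S` correspond to intermediate
subrepresentations `S ≤ U ≤ T` of `W`, with `d_{U/S} = d_U - d_S`). -/
def FactorStable (σ : Q0 → ℝ) (W : RepSpace tl hd β)
    (S T : ∀ x, Submodule ℂ (Fin (β x) → ℂ)) : Prop :=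
  wt σ (dimVec T) - wt σ (dimVec S) = 0 ∧
    ∀ U : ∀ x, Submodule ℂ (Fin (β x) → ℂ), IsSubrep W U →
      (∀ x, S x ≤ U x) → (∀ x, U x ≤ T x) → U ≠ S → U ≠ T →
        wt σ (dimVec U) - wt σ (dimVec S) < 0

/-- A Jordan–Hölder filtration `0 = W_0 ⊊ W_1 ⊊ ⋯ ⊊ W_l = W` of `W` in the category of
`σ`-semi-stable representations: all factors `W_i/W_{i-1}` are `σ`-stable. -/
def IsJHFiltration (σ : Q0 → ℝ) (W : RepSpace tl hd β) (l : ℕ)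
    (S : Fin (l + 1) → ∀ x, Submodule ℂ (Fin (β x) → ℂ)) : Prop :=
  (∀ i, IsSubrep W (S i)) ∧
  (∀ x, S 0 x = ⊥) ∧
  (∀ x, S (Fin.last l) x = ⊤) ∧
  (∀ i : Fin l, ∀ x, S i.castSucc x ≤ S i.succ x) ∧
  (∀ i : Fin l, S i.castSucc ≠ S i.succ) ∧
  (∀ i : Fin l, FactorStable σ W (S i.castSucc) (S i.succ))

/-- `V` is isomorphic to the associated graded representation
`⊕_{i=1}^{l} S_i/S_{i-1}` of the filtration `S` of `W` : there are linear maps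
`f i x : ℂ^{β(x)} → ℂ^{β(x)}` which vanish on `S_{i-1}`, are injective on `S_i`
modulo `S_{i-1}`, intertwine `W` and `V` on `S_i`, and whose images decompose
`ℂ^{β(x)}` as an internal direct sum. -/
def IsGradedIso (W V : RepSpace tl hd β) (l : ℕ)
    (S : Fin (l + 1) → ∀ x, Submodule ℂ (Fin (β x) → ℂ)) : Prop :=
  ∃ f : Fin l → ∀ x, (Fin (β x) → ℂ) →ₗ[ℂ] (Fin (β x) → ℂ),
    (∀ (i : Fin l) (x : Q0), ∀ v ∈ S i.castSucc x, f i x v = 0) ∧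
    (∀ (i : Fin l) (x : Q0), ∀ v ∈ S i.succ x, f i x v = 0 → v ∈ S i.castSucc x) ∧
    (∀ (i : Fin l) (a : Q1), ∀ v ∈ S i.succ (tl a),
      f i (hd a) ((W a).mulVec v) = (V a).mulVec (f i (tl a) v)) ∧
    (∀ x : Q0, iSupIndep fun i : Fin l => (S i.succ x).map (f i x)) ∧
    (∀ x : Q0, (⨆ i : Fin l, (S i.succ x).map (f i x)) = ⊤)

/-! ### Auxiliary lemmas -/

lemma wt_add' (σ : Q0 → ℝ) (γ₁ γ₂ : Q0 → ℕ) :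
    wt σ (fun x => γ₁ x + γ₂ x) = wt σ γ₁ + wt σ γ₂ := by
  unfold wt
  rw [← Finset.sum_add_distrib]
  congr 1; ext x; push_cast; ring

lemma matrix_ext_mulVec {m n : ℕ} {A B : Matrix (Fin m) (Fin n) ℂ}
    (h : ∀ v, A.mulVec v = B.mulVec v) : A = B :=
  Matrix.toLin'.injective (LinearMap.ext fun v => by
    simpa [Matrix.toLin'_apply] using h v)

set_option synthInstance.maxHeartbeats 400000 in
set_option maxHeartbeats 1000000 in
lemma exists_subrep_complement (σ : Q0 → ℝ) (W : RepSpace tl hd β)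
    (hPS : Polystable σ W) (S : ∀ x, Submodule ℂ (Fin (β x) → ℂ))
    (hS : IsSubrep W S) (hS0 : wt σ (dimVec S) = 0) :
    ∃ C : ∀ x, Submodule ℂ (Fin (β x) → ℂ), IsSubrep W C ∧
      ∀ x, Module.finrank ℂ (S x) + Module.finrank ℂ (C x) = β x := by
  classical
  choose C₀ hC using fun x => (S x).exists_isCompl
  -- the projection onto `S x` along `C₀ x`
  set e : ∀ x, (Fin (β x) → ℂ) →ₗ[ℂ] (Fin (β x) → ℂ) :=
    fun x => (S x).subtype ∘ₗ (S x).linearProjOfIsCompl (C₀ x) (hC x) with he_def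
  have he_mem : ∀ x v, e x v ∈ S x := fun x v =>
    ((S x).linearProjOfIsCompl (C₀ x) (hC x) v).2
  have he_S : ∀ x, ∀ v ∈ S x, e x v = v := by
    intro x v hv
    exact
      congrArg Subtype.val (Submodule.linearProjOfIsCompl_apply_left (hC x) ⟨v, hv⟩)
  have he_idem : ∀ x v, e x (e x v) = e x v := fun x v => he_S x _ (he_mem x v)
  have he_ker : ∀ x v, e x v = 0 ↔ v ∈ C₀ x := by
    intro x v
    simp [he_def, Submodule.linearProjOfIsCompl_apply_eq_zero_iff]
    exact Submodule.linearProjOfIsCompl_apply_eq_zero_iff (hC x)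
  -- the block-diagonal degeneration `W0` and the off-diagonal matrix `Bm`
  set lm : ∀ a : Q1, (Fin (β (tl a)) → ℂ) →ₗ[ℂ] (Fin (β (hd a)) → ℂ) :=
    fun a => e (hd a) ∘ₗ (W a).mulVecLin ∘ₗ e (tl a)
      + (LinearMap.id - e (hd a)) ∘ₗ (W a).mulVecLin ∘ₗ (LinearMap.id - e (tl a))
    with hlm_def
  set W0 : RepSpace tl hd β := fun a => LinearMap.toMatrix' (lm a) with hW0_def
  set Bm : RepSpace tl hd β := fun a =>
    LinearMap.toMatrix' (e (hd a) ∘ₗ (W a).mulVecLin ∘ₗ (LinearMap.id - e (tl a)))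
    with hBm_def
  have hW0v : ∀ a v, (W0 a).mulVec v = lm a v := by
    intro a v
    rw [hW0_def, ← Matrix.toLin'_apply, Matrix.toLin'_toMatrix']
  have hBv : ∀ a v, (Bm a).mulVec v = e (hd a) ((W a).mulVec (v - e (tl a) v)) := by
    intro a v
    rw [hBm_def, ← Matrix.toLin'_apply, Matrix.toLin'_toMatrix']
    simp [Matrix.mulVecLin_apply]
  have hlm_apply : ∀ a v, lm a v =
      e (hd a) ((W a).mulVec (e (tl a) v)) + ((W a).mulVec (v - e (tl a) v)
        - e (hd a) ((W a).mulVec (v - e (tl a) v))) := by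
    intro a v
    simp [hlm_def, Matrix.mulVecLin_apply, LinearMap.sub_apply, sub_eq_add_neg]
  have factA : ∀ a, ∀ v ∈ S (tl a), (W0 a).mulVec v = (W a).mulVec v := by
    intro a v hv
    rw [hW0v, hlm_apply, he_S (tl a) v hv, sub_self, Matrix.mulVec_zero, map_zero,
      sub_zero, add_zero, he_S (hd a) _ (hS a v hv)]
  have factC : ∀ a v, e (hd a) ((W0 a).mulVec v) = (W0 a).mulVec (e (tl a) v) := by
    intro a v
    simp only [hW0v, hlm_apply, map_add, map_sub, he_idem, sub_self,
      Matrix.mulVec_zero, map_zero, sub_zero, add_zero]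
  have factB1 : ∀ a v, e (tl a) v = 0 → e (hd a) ((W0 a).mulVec v) = 0 := by
    intro a v hv
    rw [factC, hv, hW0v, map_zero]
  have factB2 : ∀ a v, e (tl a) v = 0 →
      (W a).mulVec v = (W0 a).mulVec v + e (hd a) ((W a).mulVec v) := by
    intro a v hv
    rw [hW0v, hlm_apply, hv, Matrix.mulVec_zero, map_zero, zero_add, sub_zero]
    abel
  -- the matrix of `e x`
  set E : ∀ x, Matrix (Fin (β x)) (Fin (β x)) ℂ := fun x => LinearMap.toMatrix' (e x)
    with hE_def
  have hEv : ∀ x v, (E x).mulVec v = e x v := by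
    intro x v
    rw [hE_def, ← Matrix.toLin'_apply, Matrix.toLin'_toMatrix']
  have hEE : ∀ x, E x * E x = E x := by
    intro x
    apply matrix_ext_mulVec
    intro v
    rw [← Matrix.mulVec_mulVec]
    simp only [hEv]
    exact he_idem x v
  have hprod : ∀ x (a b : ℂ), (E x + a • (1 - E x)) * (E x + b • (1 - E x))
      = E x + (a * b) • (1 - E x) := by
    intro x a b
    have h1 : E x * (1 - E x) = 0 := by rw [mul_sub, mul_one, hEE x, sub_self]
    have h2 : (1 - E x) * E x = 0 := by rw [sub_mul, one_mul, hEE x, sub_self]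
    have h3 : (1 - E x) * (1 - E x) = 1 - E x := by
      rw [mul_sub, mul_one, h2, sub_zero]
    simp only [mul_add, add_mul, smul_mul_assoc, mul_smul_comm, hEE x, h1, h2, h3,
      smul_zero, add_zero, zero_add, smul_smul]
    rw [mul_comm b a]
  -- the one-parameter family degenerating `W` to `W0`
  have horbit : ∀ u : ℂ, u ≠ 0 → (fun a => W0 a + u • Bm a) ∈ glOrbit W := by
    intro u hu
    refine ⟨fun x => ⟨E x + u⁻¹ • (1 - E x), E x + u • (1 - E x), ?_, ?_⟩, ?_⟩
    · rw [hprod, inv_mul_cancel₀ hu, one_smul]; abel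
    · rw [hprod, mul_inv_cancel₀ hu, one_smul]; abel
    · funext a
      apply matrix_ext_mulVec
      intro v
      have hP : e (hd a) ((W a).mulVec (e (tl a) v)) = (W a).mulVec (e (tl a) v) :=
        he_S _ _ (hS a _ (he_mem _ v))
      set P := (W a).mulVec (e (tl a) v) with hPdef
      set R := (W a).mulVec v with hRdef
      have hglact : (glAct (fun x =>
          (⟨E x + u⁻¹ • (1 - E x), E x + u • (1 - E x), by
              rw [hprod, inv_mul_cancel₀ hu, one_smul]; abel,
            by rw [hprod, mul_inv_cancel₀ hu, one_smul]; abel⟩ :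
            GL (Fin (β x)) ℂ)) W) a
          = (E (hd a) + u⁻¹ • (1 - E (hd a))) * W a * (E (tl a) + u • (1 - E (tl a))) := by
        rfl
      rw [hglact, ← Matrix.mulVec_mulVec, ← Matrix.mulVec_mulVec]
      have hgt : (E (tl a) + u • (1 - E (tl a))).mulVec v
          = e (tl a) v + u • (v - e (tl a) v) := by
        simp only [Matrix.add_mulVec, Matrix.smul_mulVec, Matrix.sub_mulVec,
          Matrix.one_mulVec, hEv]
      rw [hgt]
      have hWlin : (W a).mulVec (e (tl a) v + u • (v - e (tl a) v))
          = P + u • (R - P) := by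
        rw [Matrix.mulVec_add, Matrix.mulVec_smul, Matrix.mulVec_sub, hPdef, hRdef]
      rw [hWlin]
      have hgh : ∀ w, (E (hd a) + u⁻¹ • (1 - E (hd a))).mulVec w
          = e (hd a) w + u⁻¹ • (w - e (hd a) w) := by
        intro w
        simp only [Matrix.add_mulVec, Matrix.smul_mulVec, Matrix.sub_mulVec,
          Matrix.one_mulVec, hEv]
      rw [hgh]
      have heh : e (hd a) (P + u • (R - P)) = P + u • (e (hd a) R - P) := by
        rw [map_add, map_smul, map_sub, hP]
      rw [heh]
      have hrest : (P + u • (R - P)) - (P + u • (e (hd a) R - P))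
          = u • (R - e (hd a) R) := by
        rw [smul_sub, smul_sub, smul_sub]; abel
      rw [hrest, smul_smul, inv_mul_cancel₀ hu, one_smul]
      -- RHS
      rw [Matrix.add_mulVec, Matrix.smul_mulVec, hW0v, hlm_apply, hBv]
      rw [show (W a).mulVec (v - e (tl a) v) = R - P by
        rw [Matrix.mulVec_sub, hPdef, hRdef]]
      rw [map_sub, hP, smul_sub]
      abel
  -- `W0` lies in the Zariski closure of the orbit
  have hW0cl : W0 ∈ zClosure (glOrbit W) := by
    intro p hp
    set q : Polynomial ℂ := MvPolynomial.aeval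
      (fun i => Polynomial.C (coordFn W0 i) + coordFn Bm i • Polynomial.X) p with hq_def
    have hq_eval : ∀ u : ℂ,
        q.eval u = MvPolynomial.eval (coordFn (fun a => W0 a + u • Bm a)) p := by
      intro u
      have h1 : Polynomial.eval u q = Polynomial.aeval u q := by
        simp [Polynomial.aeval_def, Polynomial.eval₂_eq_eval_map]
      rw [h1, hq_def]
      rw [show (Polynomial.aeval u) (MvPolynomial.aeval
          (fun i => Polynomial.C (coordFn W0 i) + coordFn Bm i • Polynomial.X) p)
        = MvPolynomial.aeval (fun i => (Polynomial.aeval u)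
            (Polynomial.C (coordFn W0 i) + coordFn Bm i • Polynomial.X)) p from
        AlgHom.congr_fun (MvPolynomial.comp_aeval
          (fun i => Polynomial.C (coordFn W0 i) + coordFn Bm i • Polynomial.X)
          (Polynomial.aeval u)) p]
      have h2 : (fun i => (Polynomial.aeval u)
            (Polynomial.C (coordFn W0 i) + coordFn Bm i • Polynomial.X))
          = coordFn (fun a => W0 a + u • Bm a) := by
        funext i
        simp [coordFn, Matrix.add_apply, Matrix.smul_apply, smul_eq_mul, mul_comm]
      rw [h2, ← MvPolynomial.coe_aeval_eq_eval]
      rfl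
    have hvan : ∀ u : ℂ, u ≠ 0 → q.eval u = 0 := by
      intro u hu
      rw [hq_eval]
      exact hp _ (horbit u hu)
    have hq0 : q = 0 := by
      apply Polynomial.eq_zero_of_infinite_isRoot
      apply Set.Infinite.mono (s := ({0}ᶜ : Set ℂ))
      · intro u hu
        exact hvan u hu
      · exact Set.Finite.infinite_compl (Set.finite_singleton 0)
    have := hq_eval 0
    rw [hq0] at this
    simp only [Polynomial.eval_zero] at this
    rw [show (fun a => W0 a + (0:ℂ) • Bm a) = W0 by
      funext a; rw [zero_smul, add_zero]] at this
    exact this.symm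
  -- `W0` is `σ`-semistable
  have hW0ss : Semistable σ W0 := by
    refine ⟨hPS.1.1, ?_⟩
    intro U hU
    set US : ∀ x, Submodule ℂ (Fin (β x) → ℂ) := fun x => (U x).map (e x) with hUS_def
    set UC : ∀ x, Submodule ℂ (Fin (β x) → ℂ) := fun x => U x ⊓ C₀ x with hUC_def
    have hUSsub : IsSubrep W US := by
      intro a v hv
      obtain ⟨u, hu, rfl⟩ := Submodule.mem_map.mp hv
      have h1 : e (tl a) u ∈ S (tl a) := he_mem _ _
      rw [← factA a _ h1, ← factC]
      exact Submodule.mem_map_of_mem (hU a u hu)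
    have hVsub : IsSubrep W (fun x => S x ⊔ UC x) := by
      intro a v hv
      obtain ⟨s, hs, c, hc, rfl⟩ := Submodule.mem_sup.mp hv
      rw [Matrix.mulVec_add]
      apply Submodule.add_mem
      · exact Submodule.mem_sup_left (hS a s hs)
      · have hcU : c ∈ U (tl a) := (Submodule.mem_inf.mp hc).1
        have hcC : c ∈ C₀ (tl a) := (Submodule.mem_inf.mp hc).2
        have hc0 : e (tl a) c = 0 := (he_ker _ _).mpr hcC
        rw [factB2 a c hc0]
        apply Submodule.add_mem
        · apply Submodule.mem_sup_right
          exact Submodule.mem_inf.mpr ⟨hU a c hcU, (he_ker _ _).mp (factB1 a c hc0)⟩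
        · exact Submodule.mem_sup_left (he_mem _ _)
    have hkere : ∀ x, LinearMap.ker (e x) = C₀ x := by
      intro x
      ext v
      simp [LinearMap.mem_ker, he_ker]
    have hdU : ∀ x, dimVec U x
        = Module.finrank ℂ (US x) + Module.finrank ℂ (UC x) := by
      intro x
      have h := LinearMap.finrank_range_add_finrank_ker ((e x).domRestrict (U x))
      rw [LinearMap.range_domRestrict, LinearMap.ker_domRestrict, hkere] at h
      rw [← Submodule.finrank_map_subtype_eq (U x) ((C₀ x).comap (U x).subtype),
        Submodule.map_comap_subtype] at h
      exact h.symm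
    have hdV : ∀ x, Module.finrank ℂ (S x ⊔ UC x : Submodule ℂ (Fin (β x) → ℂ))
        = dimVec S x + Module.finrank ℂ (UC x) := by
      intro x
      have h := Submodule.finrank_sup_add_finrank_inf_eq (S x) (UC x)
      have hbot : S x ⊓ UC x = ⊥ := by
        rw [eq_bot_iff]
        intro v hv
        have hv1 : v ∈ S x := (Submodule.mem_inf.mp hv).1
        have hv2 : v ∈ C₀ x :=
          (Submodule.mem_inf.mp (Submodule.mem_inf.mp hv).2).2
        have : v = 0 := Submodule.disjoint_def.mp (hC x).disjoint v hv1 hv2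
        simp [this]
      rw [hbot, finrank_bot, add_zero] at h
      exact h
    have h1 : wt σ (dimVec US) ≤ 0 := hPS.1.2 US hUSsub
    have h2 : wt σ (dimVec fun x => S x ⊔ UC x) ≤ 0 := hPS.1.2 _ hVsub
    have h2' : wt σ (dimVec UC) ≤ 0 := by
      have hv : dimVec (fun x => S x ⊔ UC x) = fun x => dimVec S x + dimVec UC x := by
        funext x
        exact hdV x
      rw [hv, wt_add', hS0] at h2
      linarith
    have hu : dimVec U = fun x => dimVec US x + dimVec UC x := by
      funext x
      exact hdU x
    rw [hu, wt_add']
    linarith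
  -- conclude `W0` is in the orbit
  have hW0orb : W0 ∈ glOrbit W := by
    rw [← hPS.2]
    exact ⟨hW0cl, hW0ss⟩
  obtain ⟨g, hg⟩ := hW0orb
  -- the complement
  refine ⟨fun x => (C₀ x).comap ((g x).val.mulVecLin), ?_, ?_⟩
  · intro a v hv
    simp only [Submodule.mem_comap, Matrix.mulVecLin_apply] at hv ⊢
    have key : (g (hd a)).val.mulVec ((W a).mulVec v)
        = (W0 a).mulVec ((g (tl a)).val.mulVec v) := by
      have hga : W0 a = (g (hd a)).val * W a * ((g (tl a))⁻¹).val := congrFun hg a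
      rw [hga, Matrix.mulVec_mulVec, Matrix.mulVec_mulVec,
        Matrix.mul_assoc ((g (hd a)).val * W a) ((g (tl a))⁻¹).val (g (tl a)).val,
        Units.inv_mul, Matrix.mul_one]
    rw [key]
    have hc0 : e (tl a) ((g (tl a)).val.mulVec v) = 0 := (he_ker _ _).mpr hv
    exact (he_ker _ _).mp (factB1 a _ hc0)
  · intro x
    have hco1 : (g x).val.mulVecLin ∘ₗ ((g x)⁻¹).val.mulVecLin = LinearMap.id := by
      rw [← Matrix.mulVecLin_mul, Units.mul_inv, Matrix.mulVecLin_one]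
    have hco2 : ((g x)⁻¹).val.mulVecLin ∘ₗ (g x).val.mulVecLin = LinearMap.id := by
      rw [← Matrix.mulVecLin_mul, Units.inv_mul, Matrix.mulVecLin_one]
    have hcm : (C₀ x).comap ((g x).val.mulVecLin)
        = (C₀ x).map (((g x)⁻¹).val.mulVecLin) := by
      ext v
      simp only [Submodule.mem_comap, Submodule.mem_map, Matrix.mulVecLin_apply]
      constructor
      · intro hv
        exact ⟨(g x).val.mulVec v, hv, by
          rw [Matrix.mulVec_mulVec, Units.inv_mul, Matrix.one_mulVec]⟩
      · rintro ⟨w, hw, rfl⟩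
        rw [Matrix.mulVec_mulVec, Units.mul_inv, Matrix.one_mulVec]
        exact hw
    set eqx : (Fin (β x) → ℂ) ≃ₗ[ℂ] (Fin (β x) → ℂ) :=
      LinearEquiv.ofLinear (((g x)⁻¹).val.mulVecLin) ((g x).val.mulVecLin) hco2 hco1
      with heqx
    have hfr : Module.finrank ℂ ((C₀ x).map (((g x)⁻¹).val.mulVecLin))
        = Module.finrank ℂ (C₀ x) := LinearEquiv.finrank_map_eq eqx (C₀ x)
    show Module.finrank ℂ (S x)
        + Module.finrank ℂ ((C₀ x).comap ((g x).val.mulVecLin)) = β x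
    rw [hcm, hfr]
    have h := Submodule.finrank_add_eq_of_isCompl (hC x)
    rw [Module.finrank_fin_fun ℂ] at h
    exact h

lemma wt_zero_of_semistable (σ τ : Q0 → ℝ) (W : RepSpace tl hd β)
    (hPS : Polystable σ W) (S : ∀ x, Submodule ℂ (Fin (β x) → ℂ))
    (hS : IsSubrep W S) (h0 : wt σ (dimVec S) = 0) (hτ : Semistable τ W) :
    wt τ (dimVec S) = 0 := by
  obtain ⟨C, hCsub, hdim⟩ := exists_subrep_complement σ W hPS S hS h0
  have h1 := hτ.2 S hS
  have h2 := hτ.2 C hCsub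
  have h3 : wt τ (dimVec S) + wt τ (dimVec C) = 0 := by
    rw [← wt_add']
    have hβ : (fun x => dimVec S x + dimVec C x) = β := funext fun x => hdim x
    rw [hβ]
    exact hτ.1
  linarith

/-- If `σ ∈ C(Q,β)` and `W` is `σ`-polystable, then `σ` lies in the
relative interior of the orbit cone `Ω(W)`. -/
theorem polystable_weight_in_relint_orbit_cone (hQ : NoOrientedCycles tl hd)
    (σ : Q0 → ℝ) (hσ : σ ∈ EffCone tl hd β)
    (W : RepSpace tl hd β) (hW : Polystable σ W) :
    σ ∈ intrinsicInterior ℝ (OmegaCone W) := by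
  classical
  have hσΩ : σ ∈ OmegaCone W := hW.1
  -- the finite set of dimension vectors of subrepresentations of `W`
  set D : Set (Q0 → ℕ) := {γ | ∃ S, IsSubrep W S ∧ dimVec S = γ} with hD_def
  have hDfin : D.Finite := by
    have hbox : (Set.pi Set.univ fun x => Set.Iic (β x)).Finite :=
      Set.Finite.pi fun x => Set.finite_Iic (β x)
    apply hbox.subset
    rintro γ ⟨S, hSsub, rfl⟩ x -
    have h1 : Module.finrank ℂ (S x) ≤ Module.finrank ℂ (Fin (β x) → ℂ) :=
      Submodule.finrank_le (S x)
    rwa [Module.finrank_fin_fun ℂ] at h1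
  set Dneg : Set (Q0 → ℕ) := {γ ∈ D | wt σ γ < 0} with hDneg_def
  have hDnegfin : Dneg.Finite := hDfin.subset fun γ hγ => hγ.1
  set U : Set (Q0 → ℝ) := ⋂ γ ∈ Dneg, {τ | wt τ γ < 0} with hU_def
  have hwt_cont : ∀ γ : Q0 → ℕ, Continuous fun τ : Q0 → ℝ => wt τ γ := by
    intro γ
    unfold wt
    exact continuous_finset_sum _ fun x _ => (continuous_apply x).mul continuous_const
  have hUopen : IsOpen U :=
    Set.Finite.isOpen_biInter hDnegfin fun γ _ =>
      isOpen_lt (hwt_cont γ) continuous_const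
  have hσU : σ ∈ U := Set.mem_iInter₂.mpr fun γ hγ => hγ.2
  -- linear functionals vanishing on `Ω(W)` vanish on its affine span
  have hA0 : ∀ γ : Q0 → ℕ, (∀ τ ∈ OmegaCone W, wt τ γ = 0) →
      ∀ τ ∈ affineSpan ℝ (OmegaCone W), wt τ γ = 0 := by
    intro γ hγ τ hτ
    set L : (Q0 → ℝ) →ₗ[ℝ] ℝ :=
      { toFun := fun τ' => wt τ' γ
        map_add' := by
          intro τ₁ τ₂
          unfold wt
          rw [← Finset.sum_add_distrib]
          exact Finset.sum_congr rfl fun x _ => by simp [add_mul]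
        map_smul' := by
          intro c τ'
          unfold wt
          simp only [Pi.smul_apply, smul_eq_mul, RingHom.id_apply]
          rw [Finset.mul_sum]
          exact Finset.sum_congr rfl fun x _ => by ring } with hL_def
    have hle : affineSpan ℝ (OmegaCone W) ≤ (LinearMap.ker L).toAffineSubspace := by
      apply affineSpan_le.mpr
      intro τ' hτ'
      exact Submodule.mem_toAffineSubspace.mpr (LinearMap.mem_ker.mpr (hγ τ' hτ'))
    exact LinearMap.mem_ker.mp (Submodule.mem_toAffineSubspace.mp (hle hτ))
  have hβ0 : ∀ τ ∈ affineSpan ℝ (OmegaCone W), wt τ β = 0 :=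
    hA0 β fun τ' hτ' => hτ'.1
  have hsub : ∀ τ, τ ∈ affineSpan ℝ (OmegaCone W) → τ ∈ U → τ ∈ OmegaCone W := by
    intro τ hτA hτU
    refine ⟨hβ0 τ hτA, ?_⟩
    intro S hSsub
    by_cases h : wt σ (dimVec S) = 0
    · exact le_of_eq (hA0 (dimVec S)
        (fun τ' hτ' => wt_zero_of_semistable σ τ' W hW S hSsub h hτ') τ hτA)
    · have hlt : wt σ (dimVec S) < 0 := lt_of_le_of_ne (hW.1.2 S hSsub) h
      have hmem : dimVec S ∈ Dneg := ⟨⟨S, hSsub, rfl⟩, hlt⟩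
      exact le_of_lt (Set.mem_iInter₂.mp hτU (dimVec S) hmem)
  rw [mem_intrinsicInterior]
  refine ⟨⟨σ, subset_affineSpan ℝ _ hσΩ⟩, ?_, rfl⟩
  have hpre : ((↑) ⁻¹' U : Set (affineSpan ℝ (OmegaCone W)))
      ⊆ (↑) ⁻¹' (OmegaCone W) := fun y hy => hsub y y.2 hy
  exact interior_maximal hpre (hUopen.preimage continuous_subtype_val) hσU

end

end QuiverGIT
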